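/- If R is a weakly strongly 2-nil-clean ring in which 2 is nilpotent, then R is strongly nil-clean, i.e., every element of R is the sum of an idempotent and a nilpotent that commute with each other. -/

import Mathlib

/-- A ring is weakly strongly 2-nil-clean if every element is `±e ± f + n` with
`e, f` idempotents and `n` nilpotent, all commuting with each other. -/
def IsWeaklyStrongly2NilClean (R : Type*) [Ring R] : Prop :=
  ∀ a : R, ∃ e f n : R, IsIdempotentElem e ∧ IsIdempotentElem f ∧ IsNilpotent n ∧
    Commute e f ∧ Commute e n ∧ Commute f n ∧
    (a = e + f + n ∨ a = e - f + n ∨ a = -e + f + n ∨ a = -e - f + n)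

/-- A ring is strongly 2-nil-clean if every element is `e + f + n` with
`e, f` idempotents and `n` nilpotent, all commuting with each other. -/
def IsStrongly2NilClean (R : Type*) [Ring R] : Prop :=
  ∀ a : R, ∃ e f n : R, IsIdempotentElem e ∧ IsIdempotentElem f ∧ IsNilpotent n ∧
    Commute e f ∧ Commute e n ∧ Commute f n ∧ a = e + f + n


private lemma commute_two' {R : Type*} [Ring R] (x : R) : Commute (2 : R) x := by
  have : (2 : R) * x = x * 2 := by rw [two_mul, mul_two]
  exact this

private lemma commute_two_mul {R : Type*} [Ring R] {x y : R} (h : Commute x y) :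
    Commute (2 * x) y :=
  (commute_two' y).mul_left h

private lemma idem_symmdiff' {R : Type*} [Ring R] {e f : R} (he : IsIdempotentElem e)
    (hf : IsIdempotentElem f) (hef : Commute e f) :
    IsIdempotentElem (e + f - 2 * (e * f)) := by
  have hfe : f * e = e * f := hef.symm.eq
  have h1 : (2*(e*f))*e = 2*(e*f) := by
    rw [mul_assoc 2, mul_assoc e, hfe, ← mul_assoc e, he.eq]
  have h2' : (2*(e*f))*f = 2*(e*f) := by
    rw [mul_assoc 2, mul_assoc e, hf.eq]
  have h3 : e*(2*(e*f)) = 2*(e*f) := by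
    rw [← mul_assoc, show e*(2:R) = 2*e from (commute_two' e).symm.eq, mul_assoc,
      ← mul_assoc e, he.eq]
  have h4 : f*(2*(e*f)) = 2*(e*f) := by
    rw [← mul_assoc, show f*(2:R) = 2*f from (commute_two' f).symm.eq, mul_assoc,
      ← mul_assoc f e, hfe, mul_assoc, hf.eq]
  have h5 : (2*(e*f))*(2*(e*f)) = 2*(2*(e*f)) := by
    rw [mul_assoc 2 (e*f), mul_assoc e f, h4, h3]
  unfold IsIdempotentElem
  calc (e + f - 2 * (e * f)) * (e + f - 2 * (e * f))
      = e*e + e*f + f*e + f*f - (2*(e*f))*e - (2*(e*f))*f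
        - e*(2*(e*f)) - f*(2*(e*f)) + (2*(e*f))*(2*(e*f)) := by noncomm_ring
    _ = e + f - 2 * (e * f) := by
        rw [he.eq, hf.eq, hfe, h1, h2', h3, h4, h5]; noncomm_ring

theorem stronglyNilClean_of_wsnc_two_nilpotent {R : Type*} [Ring R]
    (hR : IsWeaklyStrongly2NilClean R) (h2 : IsNilpotent (2 : R)) :
    ∀ a : R, ∃ e n : R, IsIdempotentElem e ∧ IsNilpotent n ∧ Commute e n ∧ a = e + n := by
  intro a
  obtain ⟨e, f, n, he, hf, hn, hef, hen, hfn, hcase⟩ := hR a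
  have h2e : IsNilpotent (2 * e) := (commute_two' e).isNilpotent_mul_right h2
  have h2f : IsNilpotent (2 * f) := (commute_two' f).isNilpotent_mul_right h2
  have hne : Commute n e := hen.symm
  have hnf : Commute n f := hfn.symm
  obtain ⟨n', hn', hn'e, hn'f, ha⟩ :
      ∃ n' : R, IsNilpotent n' ∧ Commute n' e ∧ Commute n' f ∧ a = e + f + n' := by
    rcases hcase with h | h | h | h
    · exact ⟨n, hn, hne, hnf, h⟩
    · refine ⟨n - 2*f, ?_, ?_, ?_, by rw [h, two_mul]; abel⟩
      · exact (commute_two_mul hfn).symm.isNilpotent_sub hn h2f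
      · exact hne.sub_left (commute_two_mul hef.symm)
      · exact hnf.sub_left (commute_two_mul (Commute.refl f))
    · refine ⟨n - 2*e, ?_, ?_, ?_, by rw [h, two_mul]; abel⟩
      · exact (commute_two_mul hen).symm.isNilpotent_sub hn h2e
      · exact hne.sub_left (commute_two_mul (Commute.refl e))
      · exact hnf.sub_left (commute_two_mul hef)
    · refine ⟨n - 2*e - 2*f, ?_, ?_, ?_, by rw [h, two_mul, two_mul]; abel⟩
      · have h1 : IsNilpotent (n - 2*e) :=
          (commute_two_mul hen).symm.isNilpotent_sub hn h2e
        have hc : Commute (n - 2*e) (2*f) :=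
          (commute_two_mul hfn).symm.sub_left
            (commute_two_mul ((commute_two_mul hef.symm).symm))
        exact hc.isNilpotent_sub h1 h2f
      · exact (hne.sub_left (commute_two_mul (Commute.refl e))).sub_left
          (commute_two_mul hef.symm)
      · exact (hnf.sub_left (commute_two_mul hef)).sub_left
          (commute_two_mul (Commute.refl f))
  have hg_idem : IsIdempotentElem (e + f - 2 * (e * f)) := idem_symmdiff' he hf hef
  have hef2 : Commute n' (e * f) := hn'e.mul_right hn'f
  have h2ef : IsNilpotent (2 * (e * f)) := (commute_two' (e*f)).isNilpotent_mul_right h2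
  have hcomm : Commute (2 * (e * f)) n' := commute_two_mul hef2.symm
  have hm : IsNilpotent (2 * (e * f) + n') := hcomm.isNilpotent_add h2ef hn'
  have hgm : Commute (e + f - 2 * (e * f)) (2 * (e * f) + n') := by
    have c1 : Commute e (2 * (e*f)) :=
      (commute_two_mul ((Commute.refl e).mul_left hef.symm)).symm
    have c2 : Commute f (2 * (e*f)) :=
      (commute_two_mul (hef.mul_left (Commute.refl f))).symm
    exact ((c1.add_left c2).sub_left (Commute.refl _)).add_right
      ((hn'e.symm.add_left hn'f.symm).sub_left hcomm)
  refine ⟨e + f - 2 * (e * f), 2 * (e * f) + n', hg_idem, hm, hgm, ?_⟩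
  rw [ha]; abel
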